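/- Let C be a set of size t-1 that is disjoint from X_μ and satisfies |C ∩ (X_μ ∪ X_{μ+1} ∪ ... ∪ X_{μ+n})| ≤ n for all 0 ≤ n ≤ t-1 (subscripts mod t). For 1 ≤ n ≤ k - |X_μ| define l_n = n - Σ_{i=1}^{n} |C ∩ X_{μ+i}|, and let P_n be the set of nonnegative integers p such that there exists a sequence (p_1,...,p_n) with p_1 ∈ {0,1}, p_i ∈ {p_{i-1}, p_{i-1}+1}, p_n = p, and x^{μ+i}_{p_i} ∉ C for all 1 ≤ i ≤ n. Then |P_n| ≥ 1 + l_n for all 1 ≤ n ≤ k - |X_μ|. -/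

import Mathlib

/-- Size of the part `X n` in the construction `𝔽(k,t)`. -/
def Fsize (k t n : ℕ) : ℕ := if n ≤ (t - 1) / 2 then k - t / 2 else k - (t - 1) / 2

/-- The part `X n`, realized as pairs `(n, p)` with `p < |X n|`. -/
def Xpart (k t n : ℕ) : Finset (ℕ × ℕ) := (Finset.range (Fsize k t n)).image (fun p => (n, p))

/-- The slow-growth condition on the sequence `p`: `p 0 = 0` and each step stays or goes up by 1. -/
def slow (p : ℕ → ℕ) : Prop := p 0 = 0 ∧ ∀ m, 1 ≤ m → p m = p (m - 1) ∨ p m = p (m - 1) + 1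

/-- The block of `𝔽(k,t)` determined by the base part `n` and sequence `p`. -/
def Fblock (k t n : ℕ) (p : ℕ → ℕ) : Finset (ℕ × ℕ) :=
  Xpart k t n ∪ (Finset.Icc 1 (k - Fsize k t n)).image (fun i => ((n + i) % t, p i))

/-- The family `𝔽(k,t)`. -/
def Ffam (k t : ℕ) : Set (Finset (ℕ × ℕ)) :=
  {B | ∃ n < t, ∃ p : ℕ → ℕ, slow p ∧ B = Fblock k t n p}

/-- `C` is a blocking set of `𝔽(k,t)`. -/
def IsBlocking (k t : ℕ) (C : Finset (ℕ × ℕ)) : Prop := ∀ B ∈ Ffam k t, (C ∩ B).Nonempty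

/-- The transversal number of `𝔽(k,t)`. -/
noncomputable def tau (k t : ℕ) : ℕ := sInf {m | ∃ C : Finset (ℕ × ℕ), C.card = m ∧ IsBlocking k t C}

/-! ### Auxiliary machinery -/

/-- Finset of reachable positions at step `n`. -/
def Pfin (t μ : ℕ) (C : Finset (ℕ × ℕ)) : ℕ → Finset ℕ
  | 0 => {0}
  | n + 1 => ((Pfin t μ C n) ∪ (Pfin t μ C n).image (· + 1)).filter
      (fun p => ((μ + (n + 1)) % t, p) ∉ C)

lemma mem_Pfin_le (t μ : ℕ) (C : Finset (ℕ × ℕ)) :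
    ∀ n p, p ∈ Pfin t μ C n → p ≤ n := by
  intro n
  induction n with
  | zero => intro p hp; simp [Pfin] at hp; omega
  | succ n ih =>
    intro p hp
    simp only [Pfin, Finset.mem_filter, Finset.mem_union, Finset.mem_image] at hp
    rcases hp.1 with h | ⟨r, hr, hrp⟩
    · exact le_trans (ih _ h) (Nat.le_succ n)
    · have := ih r hr; omega

lemma card_union_succ (S : Finset ℕ) (hS : S.Nonempty) :
    S.card + 1 ≤ (S ∪ S.image (· + 1)).card := by
  have h : S ⊂ S ∪ S.image (· + 1) := by
    refine (Finset.ssubset_iff_of_subset Finset.subset_union_left).2 ?_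
    refine ⟨S.max' hS + 1,
      Finset.mem_union_right _ (Finset.mem_image_of_mem _ (S.max'_mem hS)), fun h => ?_⟩
    have := S.le_max' _ h; omega
  exact Finset.card_lt_card h

lemma p_lt_Fsize (k t μ i p : ℕ) (ht : 0 < t) (htk : t ≤ k) (hμ : μ < t)
    (hi2 : i ≤ k - Fsize k t μ) (hp : p ≤ i) :
    p < Fsize k t ((μ + i) % t) := by
  have hit : i ≤ t := by
    simp only [Fsize] at hi2; split_ifs at hi2 <;> omega
  have hm : (μ + i) % t < t := Nat.mod_lt _ ht
  have hmod : (μ + i) % t + t = μ + i ∨ (μ + i) % t = μ + i := by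
    rcases Nat.lt_or_ge (μ + i) t with h | h
    · right; exact Nat.mod_eq_of_lt h
    · left
      rw [Nat.mod_eq_sub_mod h, Nat.mod_eq_of_lt (by omega)]
      omega
  simp only [Fsize] at hi2 ⊢
  split_ifs at hi2 ⊢ <;> omega

lemma removed_le (k t μ i : ℕ) (C : Finset (ℕ × ℕ)) (T : Finset ℕ)
    (hT : ∀ p ∈ T, p < Fsize k t ((μ + i) % t)) :
    (T.filter (fun p => ((μ + i) % t, p) ∈ C)).card ≤ (C ∩ Xpart k t ((μ + i) % t)).card := by
  apply Finset.card_le_card_of_injOn (fun p => ((μ + i) % t, p))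
  · intro p hp
    simp only [Finset.mem_coe, Finset.mem_filter] at hp
    refine Finset.mem_inter.2 ⟨hp.2, ?_⟩
    simp only [Xpart, Finset.mem_image, Finset.mem_range]
    exact ⟨p, hT p hp.1, rfl⟩
  · intro a _ b _ hab
    exact congrArg Prod.snd hab

lemma sum_Icc_one (f : ℕ → ℕ) (n : ℕ) :
    ∑ i ∈ Finset.Icc 1 n, f i = ∑ i ∈ Finset.range n, f (i + 1) := by
  induction n with
  | zero => simp
  | succ n ih =>
    rw [Finset.sum_Icc_succ_top (by omega), ih, Finset.sum_range_succ]

theorem claim_Pn_card (k t : ℕ) (ht : 0 < t) (htk : t ≤ k)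
    (C : Finset (ℕ × ℕ)) (hC : C.card = t - 1)
    (μ : ℕ) (hμ : μ < t)
    (hdisj : Disjoint C (Xpart k t μ))
    (hle : ∀ n ≤ t - 1,
      (C ∩ (Finset.range (n + 1)).biUnion (fun i => Xpart k t ((μ + i) % t))).card ≤ n) :
    ∀ n, 1 ≤ n → n ≤ k - Fsize k t μ →
      1 + ((n : ℤ) - ∑ i ∈ Finset.Icc 1 n, ((C ∩ Xpart k t ((μ + i) % t)).card : ℤ)) ≤
      (({p : ℕ | ∃ q : ℕ → ℕ, (q 1 = 0 ∨ q 1 = 1) ∧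
          (∀ i, 2 ≤ i → i ≤ n → q i = q (i - 1) ∨ q i = q (i - 1) + 1) ∧
          q n = p ∧ ∀ i, 1 ≤ i → i ≤ n → ((μ + i) % t, q i) ∉ C}).ncard : ℤ) := by
  set c : ℕ → ℕ := fun i => (C ∩ Xpart k t ((μ + i) % t)).card with hc
  -- the set equals the Finset `Pfin`
  have hset : ∀ n, 1 ≤ n →
      {p : ℕ | ∃ q : ℕ → ℕ, (q 1 = 0 ∨ q 1 = 1) ∧
          (∀ i, 2 ≤ i → i ≤ n → q i = q (i - 1) ∨ q i = q (i - 1) + 1) ∧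
          q n = p ∧ ∀ i, 1 ≤ i → i ≤ n → ((μ + i) % t, q i) ∉ C}
      = ↑(Pfin t μ C n) := by
    intro n hn
    induction n with
    | zero => omega
    | succ n ih =>
      rcases Nat.eq_or_lt_of_le hn with h1 | h1
      · -- n + 1 = 1, i.e. n = 0
        have hn0 : n = 0 := by omega
        subst hn0
        have hchar : ∀ p, p ∈ Pfin t μ C 1 ↔ (p = 0 ∨ p = 1) ∧ ((μ + 1) % t, p) ∉ C := by
          intro p; simp [Pfin]
        ext p
        simp only [Set.mem_setOf_eq, Finset.mem_coe, hchar, Nat.zero_add]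
        constructor
        · rintro ⟨q, hq1, _, hqn, hqC⟩
          refine ⟨?_, ?_⟩
          · rcases hq1 with h | h
            · left; omega
            · right; omega
          · rw [← hqn]; exact hqC 1 le_rfl le_rfl
        · rintro ⟨hp, hpc⟩
          refine ⟨fun _ => p, ?_, by omega, rfl, ?_⟩
          · rcases hp with h | h
            · left; exact h
            · right; exact h
          · intro i hi1 hi2
            have : i = 1 := by omega
            subst this; exact hpc
      · -- n ≥ 1
        have hn1 : 1 ≤ n := by omega
        have ih' := ih hn1
        ext p
        simp only [Set.mem_setOf_eq, Pfin, Finset.coe_filter, Set.mem_setOf_eq,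
          Finset.mem_union, Finset.mem_image]
        constructor
        · rintro ⟨q, hq1, hqs, hqn, hqC⟩
          have hqmem : q n ∈ Pfin t μ C n := by
            have hm : q n ∈ {p : ℕ | ∃ q' : ℕ → ℕ, (q' 1 = 0 ∨ q' 1 = 1) ∧
                (∀ i, 2 ≤ i → i ≤ n → q' i = q' (i - 1) ∨ q' i = q' (i - 1) + 1) ∧
                q' n = p ∧ ∀ i, 1 ≤ i → i ≤ n → ((μ + i) % t, q' i) ∉ C} :=
              ⟨q, hq1, fun i h2 hi => hqs i h2 (by omega), rfl,
                fun i h1 hi => hqC i h1 (by omega)⟩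
            rwa [ih'] at hm
          have hstep := hqs (n + 1) (by omega) le_rfl
          simp only [Nat.add_sub_cancel] at hstep
          constructor
          · rcases hstep with h | h
            · left; rw [← hqn, h]; exact hqmem
            · right; exact ⟨q n, hqmem, by omega⟩
          · rw [← hqn]; exact hqC (n + 1) (by omega) le_rfl
        · rintro ⟨hp, hpc⟩
          have : ∃ r, r ∈ Pfin t μ C n ∧ (p = r ∨ p = r + 1) := by
            rcases hp with h | ⟨r, hr, hrp⟩
            · exact ⟨p, h, Or.inl rfl⟩
            · exact ⟨r, hr, Or.inr hrp.symm⟩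
          obtain ⟨r, hr, hpr⟩ := this
          have hrmem : r ∈ {p : ℕ | ∃ q : ℕ → ℕ, (q 1 = 0 ∨ q 1 = 1) ∧
              (∀ i, 2 ≤ i → i ≤ n → q i = q (i - 1) ∨ q i = q (i - 1) + 1) ∧
              q n = p ∧ ∀ i, 1 ≤ i → i ≤ n → ((μ + i) % t, q i) ∉ C} := by
            rw [ih']; exact hr
          obtain ⟨q, hq1, hqs, hqn, hqC⟩ := hrmem
          refine ⟨fun i => if i = n + 1 then p else q i, ?_, ?_, ?_, ?_⟩
          · simpa [show (1 : ℕ) ≠ n + 1 by omega, show n ≠ 0 by omega] using hq1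
          · intro i h2 hi
            rcases Nat.eq_or_lt_of_le hi with h | h
            · subst h
              beta_reduce
              rw [Nat.add_sub_cancel, if_pos rfl, if_neg (show n ≠ n + 1 by omega), hqn]
              exact hpr
            · have hin : i ≤ n := by omega
              have hi1 : i - 1 ≠ n + 1 := by omega
              simp only [if_neg (show i ≠ n + 1 by omega), if_neg hi1]
              exact hqs i h2 hin
          · simp
          · intro i h1 hi
            rcases Nat.eq_or_lt_of_le hi with h | h
            · simp only [h, if_pos rfl]; exact hpc
            · simp only [if_neg (show i ≠ n + 1 by omega)]
              exact hqC i h1 (by omega)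
  -- sum bound from hle
  have hsum : ∀ n ≤ t - 1, ∑ i ∈ Finset.Icc 1 n, c i ≤ n := by
    intro n hn
    have hdisjparts : ∀ i ∈ Finset.range (n + 1), ∀ j ∈ Finset.range (n + 1), i ≠ j →
        Disjoint (C ∩ Xpart k t ((μ + i) % t)) (C ∩ Xpart k t ((μ + j) % t)) := by
      intro i hi j hj hij
      have hij' : (μ + i) % t ≠ (μ + j) % t := by
        intro h
        have h' : i % t = j % t := Nat.ModEq.add_left_cancel' μ h
        simp only [Finset.mem_range] at hi hj
        rw [Nat.mod_eq_of_lt (by omega), Nat.mod_eq_of_lt (by omega)] at h'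
        exact hij h'
      refine Finset.disjoint_left.2 fun a ha hb => ?_
      have ha' := (Finset.mem_inter.1 ha).2
      have hb' := (Finset.mem_inter.1 hb).2
      simp only [Xpart, Finset.mem_image, Finset.mem_range] at ha' hb'
      obtain ⟨pa, _, hpa⟩ := ha'
      obtain ⟨pb, _, hpb⟩ := hb'
      apply hij'
      rw [← hpa] at hpb
      exact (congrArg Prod.fst hpb).symm
    have hinter : C ∩ (Finset.range (n + 1)).biUnion (fun i => Xpart k t ((μ + i) % t))
        = (Finset.range (n + 1)).biUnion (fun i => C ∩ Xpart k t ((μ + i) % t)) := by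
      ext a
      simp only [Finset.mem_inter, Finset.mem_biUnion]
      tauto
    have hcard := hle n hn
    rw [hinter, Finset.card_biUnion hdisjparts] at hcard
    have hc0 : c 0 = 0 := by
      simp only [hc, Nat.add_zero, Nat.mod_eq_of_lt hμ]
      rw [Finset.card_eq_zero, ← Finset.disjoint_iff_inter_eq_empty]
      exact hdisj
    rw [Finset.sum_range_succ'] at hcard
    calc ∑ i ∈ Finset.Icc 1 n, c i = ∑ i ∈ Finset.range n, c (i + 1) := sum_Icc_one c n
    _ ≤ ∑ i ∈ Finset.range n, c (i + 1) + c 0 := Nat.le_add_right _ _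
    _ ≤ n := hcard
  have hbound : k - Fsize k t μ ≤ t - 1 ∨ k - Fsize k t μ = 0 := by
    simp only [Fsize]; split_ifs <;> omega
  -- the main induction on cardinality
  have main : ∀ n, 1 ≤ n → n ≤ k - Fsize k t μ →
      n + 1 ≤ (Pfin t μ C n).card + ∑ i ∈ Finset.Icc 1 n, c i := by
    intro n
    induction n with
    | zero => omega
    | succ n ih =>
      intro _ hle2
      rcases Nat.eq_zero_or_pos n with hn0 | hn1
      · -- base case n + 1 = 1
        subst hn0
        have hT : ∀ p ∈ ({0} : Finset ℕ) ∪ ({0} : Finset ℕ).image (· + 1),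
            p < Fsize k t ((μ + 1) % t) := by
          intro p hp
          apply p_lt_Fsize k t μ 1 p ht htk hμ hle2
          simp only [Finset.mem_union, Finset.mem_image, Finset.mem_singleton] at hp
          omega
        have hsplit := Finset.card_filter_add_card_filter_not
          (s := ({0} : Finset ℕ) ∪ ({0} : Finset ℕ).image (· + 1))
          (fun p => ((μ + 1) % t, p) ∉ C)
        have hrem : ((({0} : Finset ℕ) ∪ ({0} : Finset ℕ).image (· + 1)).filter
            (fun p => ¬((μ + 1) % t, p) ∉ C)).card ≤ c 1 := by
          simp only [not_not]
          exact removed_le k t μ 1 C _ hT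
        have hcardT : (({0} : Finset ℕ) ∪ ({0} : Finset ℕ).image (· + 1)).card = 2 := by decide
        have hPfin1 : (Pfin t μ C 1).card
            = ((({0} : Finset ℕ) ∪ ({0} : Finset ℕ).image (· + 1)).filter
              (fun p => ((μ + 1) % t, p) ∉ C)).card := by
          rfl
        rw [Finset.Icc_self, Finset.sum_singleton, hPfin1]
        omega
      · -- inductive step
        have ihn := ih hn1 (by omega)
        have hsn : ∑ i ∈ Finset.Icc 1 n, c i ≤ n := by
          apply hsum
          rcases hbound with h | h <;> omega
        have hne : (Pfin t μ C n).Nonempty := by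
          rw [← Finset.card_pos]; omega
        set T := Pfin t μ C n ∪ (Pfin t μ C n).image (· + 1) with hTdef
        have hTb : ∀ p ∈ T, p < Fsize k t ((μ + (n + 1)) % t) := by
          intro p hp
          apply p_lt_Fsize k t μ (n + 1) p ht htk hμ hle2
          simp only [hTdef, Finset.mem_union, Finset.mem_image] at hp
          rcases hp with h | ⟨r, hr, hrp⟩
          · exact le_trans (mem_Pfin_le t μ C n p h) (Nat.le_succ n)
          · have := mem_Pfin_le t μ C n r hr; omega
        have hsplit := Finset.card_filter_add_card_filter_not
          (s := T) (fun p => ((μ + (n + 1)) % t, p) ∉ C)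
        have hrem : (T.filter (fun p => ¬((μ + (n + 1)) % t, p) ∉ C)).card ≤ c (n + 1) := by
          simp only [not_not]
          exact removed_le k t μ (n + 1) C T hTb
        have hgrow := card_union_succ (Pfin t μ C n) hne
        rw [← hTdef] at hgrow
        have hPfin : (Pfin t μ C (n + 1)).card
            = (T.filter (fun p => ((μ + (n + 1)) % t, p) ∉ C)).card := rfl
        rw [Finset.sum_Icc_succ_top (by omega), hPfin]
        omega
  intro n hn1 hn2
  rw [hset n hn1, Set.ncard_coe_finset]
  have hmain := main n hn1 hn2
  have hcast : ((∑ i ∈ Finset.Icc 1 n, c i : ℕ) : ℤ)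
      = ∑ i ∈ Finset.Icc 1 n, ((C ∩ Xpart k t ((μ + i) % t)).card : ℤ) := by
    push_cast [hc]; rfl
  have h2 : (n : ℤ) + 1 ≤ ((Pfin t μ C n).card : ℤ) + ((∑ i ∈ Finset.Icc 1 n, c i : ℕ) : ℤ) := by
    exact_mod_cast hmain
  rw [hcast] at h2
  linarith
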